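/- Let X be a compact metric space and f : X → X continuous. For any N > 0 and any x, y ∈ X and ε > 0: if every iterate f^j (1 ≤ j ≤ N) satisfies the uniform continuity bound d(f^j u, f^j v) < ε whenever d(u,v) < s (for some s > 0 depending on ε), and limsup over subsequence densities gives F*(f^N, x, y, s) ≥ c > 0, then F*(f, x, y, ε) ≥ c/N. -/

import Mathlib

open Filter Set
open scoped Classical

/-- Lower density of times `i < n` with `dist (f^[i] x) (f^[i] y) < t`. -/
noncomputable def ldens {X : Type*} [MetricSpace X] (f : X → X) (x y : X) (t : ℝ) : ℝ :=
  Filter.liminf (fun n : ℕ =>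
    (((Finset.range n).filter (fun i => dist (f^[i] x) (f^[i] y) < t)).card : ℝ) / n)
    Filter.atTop

/-- Upper density of times `i < n` with `dist (f^[i] x) (f^[i] y) < t`. -/
noncomputable def udens {X : Type*} [MetricSpace X] (f : X → X) (x y : X) (t : ℝ) : ℝ :=
  Filter.limsup (fun n : ℕ =>
    (((Finset.range n).filter (fun i => dist (f^[i] x) (f^[i] y) < t)).card : ℝ) / n)
    Filter.atTop

/-- Lower density along the sequence of times `q i`. -/
noncomputable def ldensSeq {X : Type*} [MetricSpace X] (f : X → X) (q : ℕ → ℕ)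
    (x y : X) (t : ℝ) : ℝ :=
  Filter.liminf (fun n : ℕ =>
    (((Finset.range n).filter (fun i => dist (f^[q i] x) (f^[q i] y) < t)).card : ℝ) / n)
    Filter.atTop

/-- Upper density along the sequence of times `q i`. -/
noncomputable def udensSeq {X : Type*} [MetricSpace X] (f : X → X) (q : ℕ → ℕ)
    (x y : X) (t : ℝ) : ℝ :=
  Filter.limsup (fun n : ℕ =>
    (((Finset.range n).filter (fun i => dist (f^[q i] x) (f^[q i] y) < t)).card : ℝ) / n)
    Filter.atTop

theorem stmt_19 {X : Type*} [MetricSpace X] [CompactSpace X]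
    (f : X → X) (hf : Continuous f) (x y : X) (N : ℕ) (hN : 0 < N)
    (ε s c : ℝ) (hε : 0 < ε) (hs : 0 < s) (hc : 0 < c)
    (hunif : ∀ j : ℕ, 1 ≤ j → j ≤ N → ∀ u v : X, dist u v < s →
      dist (f^[j] u) (f^[j] v) < ε)
    (hF : c ≤ udens (f^[N]) x y s) :
    c / N ≤ udens f x y ε := by
  classical
  set a : ℕ → ℝ := fun n =>
    (((Finset.range n).filter (fun i => dist ((f^[N])^[i] x) ((f^[N])^[i] y) < s)).card : ℝ) / n
    with ha_def
  set b : ℕ → ℝ := fun n =>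
    (((Finset.range n).filter (fun i => dist (f^[i] x) (f^[i] y) < ε)).card : ℝ) / n with hb_def
  have hnn_a : ∀ n, 0 ≤ a n := fun n => div_nonneg (Nat.cast_nonneg _) (Nat.cast_nonneg _)
  have hbound_b : ∀ m, b m ≤ 1 := by
    intro m
    rcases Nat.eq_zero_or_pos m with h | h
    · simp [hb_def, h]
    · have hcard : (((Finset.range m).filter
          (fun i => dist (f^[i] x) (f^[i] y) < ε)).card : ℝ) ≤ m := by
        exact_mod_cast le_trans (Finset.card_filter_le _ _) (le_of_eq (Finset.card_range m))
      have hm : (0:ℝ) < m := by exact_mod_cast h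
      exact div_le_one_of_le₀ hcard (le_of_lt hm)
  have hNR : (0:ℝ) < N := by exact_mod_cast hN
  -- key combinatorial bound
  have key : ∀ n : ℕ,
      ((Finset.range n).filter (fun i => dist ((f^[N])^[i] x) ((f^[N])^[i] y) < s)).card
      ≤ ((Finset.range (N*n+1)).filter (fun i => dist (f^[i] x) (f^[i] y) < ε)).card := by
    intro n
    apply Finset.card_le_card_of_injOn (fun i => N*i+1)
    · intro i hi
      simp only [Finset.mem_coe, Finset.mem_filter, Finset.mem_range] at hi ⊢
      obtain ⟨hin, hdist⟩ := hi
      constructor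
      · have : N*i < N*n := (Nat.mul_lt_mul_left hN).mpr hin
        omega
      · have h1 : dist (f^[N*i] x) (f^[N*i] y) < s := by
          rw [Function.iterate_mul]; exact hdist
        have h2 := hunif 1 le_rfl hN (f^[N*i] x) (f^[N*i] y) h1
        have e1 : f^[N*i+1] x = f^[1] (f^[N*i] x) := by
          rw [Nat.add_comm, Function.iterate_add_apply]
        have e2 : f^[N*i+1] y = f^[1] (f^[N*i] y) := by
          rw [Nat.add_comm, Function.iterate_add_apply]
        rw [e1, e2]; exact h2
    · intro i _ j _ hij
      simp only at hij
      have h1 : N*i = N*j := by omega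
      exact Nat.eq_of_mul_eq_mul_left hN h1
  have hF' : c ≤ Filter.limsup a Filter.atTop := hF
  -- main estimate
  have main : ∀ δ : ℝ, 0 < δ → c / N - δ ≤ udens f x y ε := by
    intro δ hδ
    have hd : c - N*δ/2 < Filter.limsup a Filter.atTop := by
      have : c - N*δ/2 < c := by nlinarith
      linarith
    have hcob : Filter.IsCoboundedUnder (· ≤ ·) Filter.atTop a :=
      Filter.IsBoundedUnder.isCoboundedUnder_le
        (Filter.isBoundedUnder_of ⟨0, fun n => hnn_a n⟩)
    have hfa : ∃ᶠ n in Filter.atTop, c - N*δ/2 < a n :=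
      Filter.frequently_lt_of_lt_limsup hcob hd
    -- pick n₀ large
    set n₀ : ℕ := ⌈2*c/((N:ℝ)^2*δ)⌉₊ + 1 with hn₀def
    have hn₀ : 2*c/((N:ℝ)^2*δ) ≤ (n₀ : ℝ) := by
      have h1 := Nat.le_ceil (2*c/((N:ℝ)^2*δ))
      have h2 : ((⌈2*c/((N:ℝ)^2*δ)⌉₊ : ℕ) : ℝ) + 1 = (n₀ : ℝ) := by
        rw [hn₀def]; push_cast; ring
      linarith
    have hfreq : ∃ᶠ m in Filter.atTop, c/N - δ ≤ b m := by
      rw [Filter.frequently_atTop]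
      intro M
      obtain ⟨n, hnM, hna⟩ := Filter.frequently_atTop.mp hfa (max M (max n₀ 1))
      refine ⟨N*n+1, ?_, ?_⟩
      · have h1 : n ≤ N*n := Nat.le_mul_of_pos_left n hN
        have hM : M ≤ n := le_trans (le_max_left _ _) hnM
        omega
      · -- estimate b (N*n+1)
        have hn1 : 1 ≤ n := le_trans ((le_max_right n₀ 1).trans (le_max_right M _)) hnM
        have hnn₀ : n₀ ≤ n := le_trans ((le_max_left n₀ 1).trans (le_max_right M _)) hnM
        have hnR : (1:ℝ) ≤ n := by exact_mod_cast hn1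
        have hnn₀R : (n₀:ℝ) ≤ n := by exact_mod_cast hnn₀
        set k : ℝ := (((Finset.range n).filter
          (fun i => dist ((f^[N])^[i] x) ((f^[N])^[i] y) < s)).card : ℝ) with hk_def
        have hkn : (c - N*δ/2) * n < k := by
          have h : c - N*δ/2 < k / n := hna
          have hnpos : (0:ℝ) < n := by linarith
          rwa [lt_div_iff₀ hnpos] at h
        have hden : (0:ℝ) < ((N*n+1 : ℕ):ℝ) := by positivity
        have hkB : k ≤ (((Finset.range (N*n+1)).filter
            (fun i => dist (f^[i] x) (f^[i] y) < ε)).card : ℝ) := by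
          rw [hk_def]; exact_mod_cast key n
        have hbge : k / ((N*n+1 : ℕ):ℝ) ≤ b (N*n+1) := by
          simp only [hb_def]
          gcongr
        have hcast : ((N*n+1 : ℕ):ℝ) = (N:ℝ)*(n:ℝ)+1 := by push_cast; ring
        have h2c : 2*c ≤ (N:ℝ)^2*δ*(n:ℝ) := by
          have hpos : (0:ℝ) < (N:ℝ)^2*δ := by positivity
          have h1 : 2*c/((N:ℝ)^2*δ) ≤ (n:ℝ) := le_trans hn₀ hnn₀R
          rw [div_le_iff₀ hpos] at h1
          nlinarith
        have hstep : c/N - δ ≤ k / ((N*n+1 : ℕ):ℝ) := by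
          have h2 : c/N - δ = (c - δ*(N:ℝ))/(N:ℝ) := by field_simp
          rw [h2, div_le_div_iff₀ hNR hden, hcast]
          nlinarith [mul_lt_mul_of_pos_right hkn hNR, h2c, hδ, hNR, hnR]
        linarith [hstep.trans hbge]
    exact Filter.le_limsup_of_frequently_le hfreq
      (Filter.isBoundedUnder_of ⟨1, hbound_b⟩)
  -- conclude
  have := fun δ hδ => main δ hδ
  by_contra hcon
  push_neg at hcon
  have hδ : 0 < (c/N - udens f x y ε)/2 := by linarith
  have := main _ hδ
  linarith
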